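/- Let ε be a countable ordinal and (Λ, h) ∈ Y_ε. Then the set B_Λ = {x : ℕ → ℕ | no η ∈ Ω_Λ⁺ is an initial segment of x} is 𝔻-nowhere dense: for every p ∈ 𝔻 there exists q ∈ 𝔻 with p ≤ q and set(q) ∩ B_Λ = ∅. In particular B_Λ ∈ I_{𝔻,ℵ₀}. -/

import Mathlib

/-- A Hechler condition: a pair `(t, f)` where the function `f : ℕ → ℕ` extends
the finite sequence `t`. -/
def HCond (p : List ℕ × (ℕ → ℕ)) : Prop :=
  ∀ i < p.1.length, p.2 i = p.1.getD i 0

/-- The Hechler order: `(t, f) ≤ (t', f')` iff `t` is an initial segment of `t'`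
and `f n ≤ f' n` for all `n`. -/
def HLe (p q : List ℕ × (ℕ → ℕ)) : Prop :=
  p.1 <+: q.1 ∧ ∀ n, p.2 n ≤ q.2 n

/-- Compatibility of Hechler conditions. -/
def HCompat (p q : List ℕ × (ℕ → ℕ)) : Prop :=
  ∃ r, HCond r ∧ HLe p r ∧ HLe q r

/-- `t` is an initial segment of the function `x : ℕ → ℕ`. -/
def PrefixOf (t : List ℕ) (x : ℕ → ℕ) : Prop :=
  ∀ i < t.length, x i = t.getD i 0

/-- `set(p)`: the reals extending the trunk of `p` and dominating its side function. -/
def HSet (p : List ℕ × (ℕ → ℕ)) : Set (ℕ → ℕ) :=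
  {x | PrefixOf p.1 x ∧ ∀ n, p.2 n ≤ x n}

/-- `X` is `𝔻`-nowhere dense. -/
def HNwd (X : Set (ℕ → ℕ)) : Prop :=
  ∀ p, HCond p → ∃ q, HCond q ∧ HLe p q ∧ HSet q ∩ X = ∅

/-- The ideal `I_{𝔻,ℵ₀}`: sets covered by countably many `𝔻`-nowhere dense sets. -/
def HIdeal (X : Set (ℕ → ℕ)) : Prop :=
  ∃ B : ℕ → Set (ℕ → ℕ), (∀ n, HNwd (B n)) ∧ X ⊆ ⋃ n, B n



/-- The tree conditions (i)-(iii) on `Λ` from the definition of `Y_ε`. -/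
def LamTree (Λ : Set (List ℕ)) : Prop :=
  Λ.Nonempty ∧
  (∀ ρ ∈ Λ, ∀ σ : List ℕ, σ <+: ρ → σ ∈ Λ) ∧
  (∀ ρ ∈ Λ, (∀ k : ℕ, ρ ++ [k] ∈ Λ) ∨ (∀ k : ℕ, ρ ++ [k] ∉ Λ)) ∧
  (∀ ν₁ ν₂ : List ℕ, ν₁.length = ν₂.length → ν₁ ∈ Λ →
      (∀ l, ν₁.getD l 0 ≤ ν₂.getD l 0) → ν₂ ∈ Λ) ∧
  ¬ ∃ x : ℕ → ℕ, ∀ n : ℕ, (List.ofFn fun i : Fin n => x i) ∈ Λ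

/-- The conditions on the rank function `h : Λ → ε + 1` from the definition of `Y_ε`. -/
def LamRank (ε : Ordinal) (Λ : Set (List ℕ)) (h : List ℕ → Ordinal) : Prop :=
  (∀ ρ ∈ Λ, h ρ ≤ ε) ∧
  h [] = ε ∧
  (∀ ρ₁ ∈ Λ, ∀ ρ₂ ∈ Λ, ρ₁ <+: ρ₂ → ρ₁ ≠ ρ₂ → h ρ₂ < h ρ₁) ∧
  (∀ ρ ∈ Λ, ∀ ζ : Ordinal, h ρ = ζ + 1 → ∀ k : ℕ, ρ ++ [k] ∈ Λ → h (ρ ++ [k]) = ζ) ∧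
  (∀ ρ ∈ Λ, Order.IsSuccLimit (h ρ) →
      ∀ β < h ρ, ∃ K : ℕ, ∀ k ≥ K, ρ ++ [k] ∈ Λ → β ≤ h (ρ ++ [k]))

/-- `(Λ, h) ∈ Y_ε`. -/
def MemY (ε : Ordinal) (Λ : Set (List ℕ)) (h : List ℕ → Ordinal) : Prop :=
  LamTree Λ ∧ LamRank ε Λ h

/-- `max(Λ)`: the elements of `Λ` with no proper extension in `Λ`. -/
def maxLam (Λ : Set (List ℕ)) : Set (List ℕ) :=
  {ρ ∈ Λ | ∀ σ ∈ Λ, ρ <+: σ → σ = ρ}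

/-- `Ω_M`: sequences of the form `η₀⌢⟨2n₀+1⟩⌢η₁⌢⟨2n₁+1⟩⌢⋯⌢η_k` with all `ηᵢ ∈ M`. -/
inductive InOmega (M : Set (List ℕ)) : List ℕ → Prop
  | base : ∀ η ∈ M, InOmega M η
  | step : ∀ ν, InOmega M ν → ∀ (n : ℕ), ∀ η ∈ M, InOmega M (ν ++ (2 * n + 1) :: η)

/-- `Ω_M⁺ = {ν⌢⟨2n⟩ : ν ∈ Ω_M, n ∈ ℕ}`. -/
def OmegaPlus (M : Set (List ℕ)) : Set (List ℕ) :=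
  {ρ | ∃ ν, InOmega M ν ∧ ∃ n : ℕ, ρ = ν ++ [2 * n]}

/-- `B_Λ`: the reals having no initial segment in `Ω_{max Λ}⁺`. -/
def BLam (Λ : Set (List ℕ)) : Set (ℕ → ℕ) :=
  {x | ∀ η ∈ OmegaPlus (maxLam Λ), ¬ PrefixOf η x}


section Aux

variable {Λ : Set (List ℕ)}

lemma nil_mem_lam (hT : LamTree Λ) : ([] : List ℕ) ∈ Λ := by
  obtain ⟨ρ, hρ⟩ := hT.1
  exact hT.2.1 ρ hρ [] (List.nil_prefix)

lemma ext_all (hT : LamTree Λ) {ρ : List ℕ} (hρ : ρ ∈ Λ) (hm : ρ ∉ maxLam Λ) :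
    ∀ k, ρ ++ [k] ∈ Λ := by
  have : ∃ σ ∈ Λ, ρ <+: σ ∧ σ ≠ ρ := by
    by_contra hcon
    push_neg at hcon
    exact hm ⟨hρ, fun σ hσ hpre => hcon σ hσ hpre⟩
  obtain ⟨σ, hσ, ⟨u, rfl⟩, hne⟩ := this
  have hu : u ≠ [] := by rintro rfl; simp at hne
  obtain ⟨a, u', rfl⟩ := List.exists_cons_of_ne_nil hu
  have h1 : ρ ++ [a] ∈ Λ := by
    refine hT.2.1 _ hσ _ ⟨u', by simp⟩
  rcases hT.2.2.1 ρ hρ with hall | hnone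
  · exact hall
  · exact absurd h1 (hnone a)

lemma extend_to_max {ε : Ordinal} {h : List ℕ → Ordinal}
    (hT : LamTree Λ) (hR : LamRank ε Λ h) :
    ∀ τ ∈ Λ, ∀ g : ℕ → ℕ,
      ∃ s : List ℕ, τ ++ s ∈ maxLam Λ ∧ ∀ j < s.length, g j ≤ s.getD j 0 := by
  suffices H : ∀ o : Ordinal, ∀ τ ∈ Λ, h τ = o → ∀ g : ℕ → ℕ,
      ∃ s : List ℕ, τ ++ s ∈ maxLam Λ ∧ ∀ j < s.length, g j ≤ s.getD j 0 by
    intro τ hτ g; exact H (h τ) τ hτ rfl g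
  intro o
  induction o using Ordinal.induction with
  | _ o IH =>
    intro τ hτ ho g
    subst ho
    by_cases hm : τ ∈ maxLam Λ
    · exact ⟨[], by simpa using hm, by simp⟩
    · have hk : τ ++ [g 0] ∈ Λ := ext_all hT hτ hm (g 0)
      have hlt : h (τ ++ [g 0]) < h τ :=
        hR.2.2.1 τ hτ _ hk ⟨[g 0], rfl⟩ (by simp)
      obtain ⟨s', hs', hb⟩ := IH _ hlt _ hk rfl (fun j => g (j + 1))
      refine ⟨g 0 :: s', by simpa using hs', ?_⟩
      intro j hj
      cases j with
      | zero => simp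
      | succ j => simpa using hb j (by simpa using hj)

lemma parse_lemma (hT : LamTree Λ) (t : List ℕ)
    (hnp : ∀ u, u <+: t → u ∉ OmegaPlus (maxLam Λ)) :
    ∃ τ ∈ Λ, t = τ ∨
      ∃ ν n, InOmega (maxLam Λ) ν ∧ t = ν ++ (2 * n + 1) :: τ := by
  induction t using List.reverseRecOn with
  | nil => exact ⟨[], nil_mem_lam hT, Or.inl rfl⟩
  | append_singleton t c IH =>
    obtain ⟨τ, hτ, hcase⟩ := IH fun u hu => hnp u (hu.trans (List.prefix_append _ _))
    by_cases hm : τ ∈ maxLam Λ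
    · have hΩ : InOmega (maxLam Λ) t := by
        rcases hcase with rfl | ⟨ν, n, hν, rfl⟩
        · exact InOmega.base _ hm
        · exact InOmega.step _ hν _ _ hm
      rcases Nat.even_or_odd c with ⟨m, hc⟩ | ⟨m, hc⟩
      · exact absurd ⟨t, hΩ, m, by rw [hc]; ring_nf⟩
          (hnp (t ++ [c]) (List.prefix_refl _))
      · exact ⟨[], nil_mem_lam hT, Or.inr ⟨t, m, hΩ, by rw [hc]⟩⟩
    · refine ⟨τ ++ [c], ext_all hT hτ hm c, ?_⟩
      rcases hcase with rfl | ⟨ν, n, hν, rfl⟩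
      · exact Or.inl rfl
      · exact Or.inr ⟨ν, n, hν, by simp⟩

lemma prefixOf_of_prefix {u t : List ℕ} (h : u <+: t) {x : ℕ → ℕ}
    (hx : PrefixOf t x) : PrefixOf u x := by
  obtain ⟨v, rfl⟩ := h
  intro i hi
  rw [hx i (by simp; omega), List.getD_append _ _ _ _ hi]

end Aux


/-- For `(Λ, h) ∈ Y_ε`, the set `B_Λ` of reals having no initial
segment in `Ω_Λ⁺` is `𝔻`-nowhere dense; in particular `B_Λ ∈ I_{𝔻,ℵ₀}`. -/

theorem BLam_nowhere_dense
    (ε : Ordinal) (hε : ε < (Cardinal.aleph 1).ord)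
    (Λ : Set (List ℕ)) (h : List ℕ → Ordinal) (hY : MemY ε Λ h) :
    HNwd (BLam Λ) ∧ HIdeal (BLam Λ) := by
  obtain ⟨hT, hR⟩ := hY
  have hnwd : HNwd (BLam Λ) := by
    rintro ⟨t, f⟩ hp
    by_cases hc : ∃ u, u <+: t ∧ u ∈ OmegaPlus (maxLam Λ)
    · -- q = p works
      refine ⟨(t, f), hp, ⟨List.prefix_refl _, fun n => le_refl _⟩, ?_⟩
      ext x
      simp only [Set.mem_inter_iff, Set.mem_empty_iff_false, iff_false, not_and]
      rintro ⟨hpre, -⟩ hB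
      obtain ⟨u, hu, huΩ⟩ := hc
      exact hB u huΩ (prefixOf_of_prefix hu hpre)
    · push_neg at hc
      obtain ⟨τ, hτ, hcase⟩ := parse_lemma hT t hc
      obtain ⟨s, hsmax, hsb⟩ := extend_to_max hT hR τ hτ (fun j => f (t.length + j))
      have hΩ : InOmega (maxLam Λ) (t ++ s) := by
        rcases hcase with rfl | ⟨ν, n, hν, rfl⟩
        · exact InOmega.base _ hsmax
        · have : ν ++ (2 * n + 1) :: τ ++ s = ν ++ (2 * n + 1) :: (τ ++ s) := by simp
          rw [this]
          exact InOmega.step _ hν _ _ hsmax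
      set m : ℕ := f (t.length + s.length) with hm
      set t' : List ℕ := (t ++ s) ++ [2 * m] with ht'
      have ht'Ω : t' ∈ OmegaPlus (maxLam Λ) := ⟨t ++ s, hΩ, m, rfl⟩
      -- key bound: f i ≤ t'.getD i 0 for i < t'.length
      have hbound : ∀ i < t'.length, f i ≤ t'.getD i 0 := by
        intro i hi
        have hlen : t'.length = t.length + s.length + 1 := by simp [ht']; omega
        rcases lt_or_ge i t.length with h1 | h1
        · have : t'.getD i 0 = t.getD i 0 := by
            rw [ht', List.getD_append _ _ _ _ (by simp; omega),
              List.getD_append _ _ _ _ h1]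
          rw [this, ← hp i h1]
        · rcases lt_or_ge i (t.length + s.length) with h2 | h2
          · have : t'.getD i 0 = s.getD (i - t.length) 0 := by
              rw [ht', List.getD_append _ _ _ _ (by simp; omega),
                List.getD_append_right _ _ _ _ (by simpa using h1)]
            rw [this]
            have := hsb (i - t.length) (by omega)
            have heq : t.length + (i - t.length) = i := by omega
            rwa [heq] at this
          · have hieq : i = t.length + s.length := by omega
            have : t'.getD i 0 = 2 * m := by
              rw [ht', List.getD_append_right _ _ _ _ (by simp; omega)]
              simp [hieq]
            rw [this, hieq, ← hm]
            omega
      refine ⟨(t', fun n => max (f n) (t'.getD n 0)), ?_, ?_, ?_⟩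
      · intro i hi
        exact max_eq_right (hbound i hi)
      · exact ⟨⟨s ++ [2 * m], by simp [ht']⟩, fun n => le_max_left _ _⟩
      · ext x
        simp only [Set.mem_inter_iff, Set.mem_empty_iff_false, iff_false, not_and]
        rintro ⟨hpre, -⟩ hB
        exact hB t' ht'Ω hpre
  exact ⟨hnwd, ⟨fun _ => BLam Λ, fun _ => hnwd, fun x hx => Set.mem_iUnion.2 ⟨0, hx⟩⟩⟩
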